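/- Let D be a triangulated category with a t-structure 𝒰 = (U^{≤0}, U^{≥0}) with heart ℋ = U^{≤0} ∩ U^{≥0}, let m be a positive integer, and let S be a triangulated full subcategory of D such that ℋ ⊆ S and (S ∩ U^{≤0}, S ∩ U^{≥0}) is a t-structure on S. Let (X^{≤0}, X^{≥0}) be a t-structure on D with U^{≤-m} ⊆ X^{≤0} ⊆ U^{≤0}. Then (S ∩ U^{≤-m}) * (X^{≤0} ∩ U^{≥-(m-1)}) = S ∩ X^{≤0} and (X^{≥1} ∩ U^{≤0})[1] * (S ∩ U^{≥0}) = S ∩ X^{≥0}. -/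

import Mathlib

open CategoryTheory Category Limits Pretriangulated

universe v u

variable (D : Type u) [Category.{v} D] [Preadditive D] [HasZeroObject D]
  [HasShift D ℤ] [∀ n : ℤ, (shiftFunctor D n).Additive]
  [Pretriangulated D] [HasBinaryBiproducts D]

/-- `shiftSet D S n` is the full subcategory `S[n]`: objects isomorphic to `X⟦n⟧`
with `X ∈ S`. -/
def shiftSet (S : Set D) (n : ℤ) : Set D :=
  {A | ∃ B ∈ S, Nonempty (A ≅ B⟦n⟧)}

/-- `starSet D X Y` is `X * Y`: the class of objects `A` admitting a distinguished
triangle `X → A → Y → X[1]` with `X ∈ 𝒳` and `Y ∈ 𝒴`. -/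
def starSet (X Y : Set D) : Set D :=
  {A | ∃ (B C : D) (f : B ⟶ A) (g : A ⟶ C) (h : C ⟶ B⟦(1 : ℤ)⟧),
    B ∈ X ∧ C ∈ Y ∧ Triangle.mk f g h ∈ distTriang D}

/-- `Hom(X, Y) = 0`: every morphism from an object of `X` to an object of `Y` is zero. -/
def homZero (X Y : Set D) : Prop :=
  ∀ A ∈ X, ∀ B ∈ Y, ∀ f : A ⟶ B, f = 0

/-- a class of objects closed under isomorphisms -/
def isoClosed (S : Set D) : Prop :=
  ∀ ⦃A B : D⦄, (A ≅ B) → A ∈ S → B ∈ S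

/-- an additive full subcategory (closed under isomorphisms) which is closed under
direct summands -/
structure AdditiveClosed (S : Set D) : Prop where
  iso : isoClosed D S
  zero : ∀ Z : D, IsZero Z → Z ∈ S
  sum : ∀ A ∈ S, ∀ B ∈ S, (A ⊞ B) ∈ S
  summand : ∀ A ∈ S, ∀ (X : D) (i : X ⟶ A) (p : A ⟶ X), i ≫ p = 𝟙 X → X ∈ S

/-- a torsion pair `(U, V)` in the triangulated category `D` -/
structure IsTorsionPair (U V : Set D) : Prop where
  addU : AdditiveClosed D U
  addV : AdditiveClosed D V
  hom_zero : homZero D U V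
  cover : ∀ A : D, A ∈ starSet D U V

/-- `t₁ ≼ t₂` for torsion pairs in a triangulated category: `U₁ ⊆ U₂` and `U₁[1] ⊆ U₂`. -/
def torsLE (U₁ U₂ : Set D) : Prop :=
  U₁ ⊆ U₂ ∧ shiftSet D U₁ 1 ⊆ U₂

/-- a torsion pair `(T, F)` in an (extension-closed) full subcategory `H` of `D`:
`T` and `F` are additive subcategories of `H` closed under direct summands,
`Hom(T, F) = 0`, and every object of `H` admits a distinguished triangle
`T → X → F → T[1]` with `T ∈ 𝒯`, `F ∈ ℱ`. -/
structure IsTorsionPairIn (H T F : Set D) : Prop where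
  subT : T ⊆ H
  subF : F ⊆ H
  isoT : ∀ ⦃A B : D⦄, (A ≅ B) → A ∈ T → B ∈ H → B ∈ T
  isoF : ∀ ⦃A B : D⦄, (A ≅ B) → A ∈ F → B ∈ H → B ∈ F
  zeroT : ∀ Z : D, IsZero Z → Z ∈ H → Z ∈ T
  zeroF : ∀ Z : D, IsZero Z → Z ∈ H → Z ∈ F
  sumT : ∀ A ∈ T, ∀ B ∈ T, (A ⊞ B) ∈ T
  sumF : ∀ A ∈ F, ∀ B ∈ F, (A ⊞ B) ∈ F
  summandT : ∀ A ∈ T, ∀ (X : D) (i : X ⟶ A) (p : A ⟶ X), i ≫ p = 𝟙 X → X ∈ H → X ∈ T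
  summandF : ∀ A ∈ F, ∀ (X : D) (i : X ⟶ A) (p : A ⟶ X), i ≫ p = 𝟙 X → X ∈ H → X ∈ F
  hom_zero : homZero D T F
  cover : ∀ A ∈ H, A ∈ starSet D T F

/-- an `s`-torsion pair in `H`: a torsion pair with moreover `Hom(T, F[-1]) = 0`. -/
structure IsSTorsionPairIn (H T F : Set D) extends IsTorsionPairIn D H T F : Prop where
  neg_hom_zero : ∀ A ∈ T, ∀ B ∈ F, ∀ f : A ⟶ B⟦(-1 : ℤ)⟧, f = 0

/-- the relation `≼` for torsion pairs in a subcategory `H`: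
`Hom(T, F') = 0` and `Hom(T, F'[-1]) = 0`. -/
def torsLEIn (T F' : Set D) : Prop :=
  homZero D T F' ∧ homZero D T (shiftSet D F' (-1))

/-- a `t`-structure `(L, G) = (S^{≤0}, S^{≥0})` on a triangulated (full) subcategory `S`
of `D` (take `S = Set.univ` for a `t`-structure on `D` itself). -/
structure IsTStructureOn (S L G : Set D) : Prop where
  subL : L ⊆ S
  subG : G ⊆ S
  isoL : ∀ ⦃A B : D⦄, (A ≅ B) → A ∈ L → B ∈ S → B ∈ L
  isoG : ∀ ⦃A B : D⦄, (A ≅ B) → A ∈ G → B ∈ S → B ∈ G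
  hom_zero : homZero D L (shiftSet D G (-1))
  cover : ∀ A ∈ S, A ∈ starSet D L (shiftSet D G (-1))
  shiftL : L ⊆ shiftSet D L (-1)
  shiftG : shiftSet D G (-1) ⊆ G

/-- a `t`-structure `(L, G) = (D^{≤0}, D^{≥0})` on `D`. -/
def IsTStructure (L G : Set D) : Prop := IsTStructureOn D Set.univ L G

/-- a triangulated full subcategory of `D`. -/
structure IsTriangulatedSub (S : Set D) : Prop where
  iso : isoClosed D S
  zero : ∀ Z : D, IsZero Z → Z ∈ S
  shift : ∀ (n : ℤ), ∀ A ∈ S, A⟦n⟧ ∈ S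
  ext₂ : ∀ (T : Triangle D), (T ∈ distTriang D) → T.obj₁ ∈ S → T.obj₃ ∈ S → T.obj₂ ∈ S

/-- an `m`-extended heart on `D`: a full subcategory of the form
`V^{≥ -(m-1)} ∩ V^{≤ 0}` for some `t`-structure `(V^{≤0}, V^{≥0})` on `D`. -/
def IsExtendedHeart (m : ℤ) (E : Set D) : Prop :=
  ∃ L G : Set D, IsTStructure D L G ∧ E = shiftSet D G (m - 1) ∩ L

/-- the relation `E₁ ≤ E₂` for `m`-extended hearts:
`E₁ ⊆ E₂[m] * E₂` and `E₂ ⊆ E₁ * E₁[-m]`. -/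
def extHeartLE (m : ℤ) (E₁ E₂ : Set D) : Prop :=
  E₁ ⊆ starSet D (shiftSet D E₂ m) E₂ ∧ E₂ ⊆ starSet D E₁ (shiftSet D E₁ (-m))

section Aux

variable {D}

lemma tstr {L G : Set D} (hT : IsTStructure D L G) : IsTStructureOn D Set.univ L G := hT

lemma shift_obj_mem {S : Set D} (n : ℤ) {A : D} (hA : A ∈ S) : A⟦n⟧ ∈ shiftSet D S n :=
  ⟨A, hA, ⟨Iso.refl _⟩⟩

lemma shiftSet_isoClosed (S : Set D) (n : ℤ) : isoClosed D (shiftSet D S n) := by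
  rintro A B e ⟨P, hP, ⟨e'⟩⟩
  exact ⟨P, hP, ⟨e.symm ≪≫ e'⟩⟩

lemma shiftSet_mono {S T : Set D} (h : S ⊆ T) (n : ℤ) : shiftSet D S n ⊆ shiftSet D T n := by
  rintro A ⟨P, hP, he⟩
  exact ⟨P, h hP, he⟩

lemma shiftSet_congr (S : Set D) {a b : ℤ} (h : a = b) : shiftSet D S a = shiftSet D S b := by
  rw [h]

lemma shiftSet_shiftSet (S : Set D) (a b : ℤ) :
    shiftSet D (shiftSet D S a) b = shiftSet D S (a + b) := by
  ext A
  constructor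
  · rintro ⟨P, ⟨B, hB, ⟨e⟩⟩, ⟨e'⟩⟩
    exact ⟨B, hB, ⟨e' ≪≫ (shiftFunctor D b).mapIso e ≪≫ ((shiftFunctorAdd D a b).app B).symm⟩⟩
  · rintro ⟨B, hB, ⟨e⟩⟩
    exact ⟨B⟦a⟧, ⟨B, hB, ⟨Iso.refl _⟩⟩, ⟨e ≪≫ (shiftFunctorAdd D a b).app B⟩⟩

lemma mem_shiftSet_iff {S : Set D} (hS : isoClosed D S) {n : ℤ} {A : D} :
    A ∈ shiftSet D S n ↔ A⟦-n⟧ ∈ S := by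
  constructor
  · rintro ⟨B, hB, ⟨e⟩⟩
    exact hS ((shiftShiftNeg B n).symm ≪≫ ((shiftFunctor D (-n)).mapIso e).symm) hB
  · intro h
    exact ⟨A⟦-n⟧, h, ⟨(shiftNegShift A n).symm⟩⟩

lemma mem_shiftSet_zero {S : Set D} (hS : isoClosed D S) {A : D} :
    A ∈ shiftSet D S 0 ↔ A ∈ S := by
  constructor
  · rintro ⟨B, hB, ⟨e⟩⟩
    exact hS (((shiftFunctorZero D ℤ).app B).symm ≪≫ e.symm) hB
  · intro h
    exact ⟨A, h, ⟨((shiftFunctorZero D ℤ).app A).symm⟩⟩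

lemma homZero_shiftSet {X Y : Set D} (h : homZero D X Y) (n : ℤ) :
    homZero D (shiftSet D X n) (shiftSet D Y n) := by
  rintro A ⟨P, hP, ⟨e⟩⟩ B ⟨Q, hQ, ⟨e'⟩⟩ f
  have h0 : (shiftFunctor D n).preimage (e.inv ≫ f ≫ e'.hom) = 0 := h P hP Q hQ _
  have hz : e.inv ≫ f ≫ e'.hom = 0 := by
    rw [← (shiftFunctor D n).map_preimage (e.inv ≫ f ≫ e'.hom), h0, Functor.map_zero]
  calc f = e.hom ≫ (e.inv ≫ f ≫ e'.hom) ≫ e'.inv := by simp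
  _ = 0 := by rw [hz]; simp

end Aux

section Aux2

set_option linter.unusedSectionVars false

variable {D}

lemma isoClosed_L {L G : Set D} (hT : IsTStructure D L G) : isoClosed D L :=
  fun _ _ e hA => (tstr hT).isoL e hA trivial

lemma isoClosed_G {L G : Set D} (hT : IsTStructure D L G) : isoClosed D G :=
  fun _ _ e hA => (tstr hT).isoG e hA trivial

lemma shift_one_mem_aisle {L G : Set D} (hT : IsTStructure D L G) {A : D} (hA : A ∈ L) :
    A⟦(1:ℤ)⟧ ∈ L := by
  obtain ⟨R, hR, ⟨e⟩⟩ := (tstr hT).shiftL hA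
  exact isoClosed_L hT ((shiftFunctor D (1:ℤ)).mapIso e ≪≫ shiftNegShift R 1).symm hR

lemma mem_coaisle_of_homZero {L G : Set D} (hT : IsTStructure D L G) {B : D}
    (hB : ∀ A ∈ L, ∀ f : A ⟶ B, f = 0) : B ∈ shiftSet D G (-1) := by
  obtain ⟨P, Q, u, v, w, hP, hQ, hd⟩ := (tstr hT).cover B (Set.mem_univ B)
  have hu : u = 0 := hB P hP u
  have hd1 := rot_of_distTriang _ hd
  obtain ⟨s, hs⟩ := Triangle.coyoneda_exact₃ _ hd1 (𝟙 (P⟦(1:ℤ)⟧)) (by simp [hu]; erw [Functor.map_zero, neg_zero, comp_zero])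
  have hs0 : s = 0 := (tstr hT).hom_zero _ (shift_one_mem_aisle hT hP) _ hQ s
  have hz : IsZero (P⟦(1:ℤ)⟧ : D) := by
    rw [IsZero.iff_id_eq_zero, hs, hs0, zero_comp]; rfl
  haveI hiso : IsIso v := (Triangle.isZero₃_iff_isIso₁ _ hd1).1 hz
  exact shiftSet_isoClosed G (-1) (asIso v).symm hQ

lemma mem_aisle_of_homZero {L G : Set D} (hT : IsTStructure D L G) {A : D}
    (hA : ∀ B ∈ shiftSet D G (-1), ∀ f : A ⟶ B, f = 0) : A ∈ L := by
  obtain ⟨P, Q, u, v, w, hP, hQ, hd⟩ := (tstr hT).cover A (Set.mem_univ A)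
  have hv : v = 0 := hA Q hQ v
  obtain ⟨s, hs⟩ := Triangle.yoneda_exact₂ _ (rot_of_distTriang _ hd) (𝟙 Q) (by simp [hv]; erw [zero_comp])
  have hs0 : s = 0 := (tstr hT).hom_zero _ (shift_one_mem_aisle hT hP) _ hQ s
  have hz : IsZero Q := by
    rw [IsZero.iff_id_eq_zero, hs, hs0, comp_zero]; rfl
  haveI hiso : IsIso u := (Triangle.isZero₃_iff_isIso₁ _ hd).1 hz
  exact isoClosed_L hT (asIso u) hP

lemma extAisle {L G : Set D} (hT : IsTStructure D L G) {T : Triangle D}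
    (hd : T ∈ distTriang D) (h₁ : T.obj₁ ∈ L) (h₃ : T.obj₃ ∈ L) : T.obj₂ ∈ L := by
  refine mem_aisle_of_homZero hT (fun B hB φ => ?_)
  obtain ⟨ψ, hψ⟩ := Triangle.yoneda_exact₂ T hd φ ((tstr hT).hom_zero _ h₁ _ hB _)
  rw [hψ, (tstr hT).hom_zero _ h₃ _ hB ψ, comp_zero]

lemma extCoaisle {L G : Set D} (hT : IsTStructure D L G) {T : Triangle D}
    (hd : T ∈ distTriang D) (h₁ : T.obj₁ ∈ shiftSet D G (-1))
    (h₃ : T.obj₃ ∈ shiftSet D G (-1)) : T.obj₂ ∈ shiftSet D G (-1) := by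
  refine mem_coaisle_of_homZero hT (fun A hA φ => ?_)
  obtain ⟨ψ, hψ⟩ := Triangle.coyoneda_exact₂ T hd φ ((tstr hT).hom_zero _ hA _ h₃ _)
  rw [hψ, (tstr hT).hom_zero _ hA _ h₁ ψ, zero_comp]

lemma starSet_isoClosed (X Y : Set D) : isoClosed D (starSet D X Y) := by
  rintro A A' e ⟨B, C', u, v, w, hB, hC, hd⟩
  refine ⟨B, C', u ≫ e.hom, e.inv ≫ v, w, hB, hC, isomorphic_distinguished _ hd _ ?_⟩
  exact Triangle.isoMk _ _ (Iso.refl _) e.symm (Iso.refl _) (by simp [Triangle.mk]) (by simp [Triangle.mk])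
    (by simp [Triangle.mk])

lemma starSet_mono {X X' Y Y' : Set D} (hX : X ⊆ X') (hY : Y ⊆ Y') :
    starSet D X Y ⊆ starSet D X' Y' := by
  rintro A ⟨B, C', u, v, w, hB, hC, hd⟩
  exact ⟨B, C', u, v, w, hX hB, hY hC, hd⟩

lemma starSet_shift {X Y : Set D} {A : D} (hA : A ∈ starSet D X Y) (n : ℤ) :
    A⟦n⟧ ∈ starSet D (shiftSet D X n) (shiftSet D Y n) := by
  obtain ⟨B, C', u, v, w, hB, hC, hd⟩ := hA
  exact ⟨B⟦n⟧, C'⟦n⟧, _, _, _, shift_obj_mem n hB, shift_obj_mem n hC,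
    Triangle.shift_distinguished _ hd n⟩

lemma tstr_shift {L G : Set D} (hT : IsTStructure D L G) (n : ℤ) :
    IsTStructure D (shiftSet D L n) (shiftSet D G n) := by
  have e : shiftSet D (shiftSet D G n) (-1) = shiftSet D (shiftSet D G (-1)) n := by
    rw [shiftSet_shiftSet, shiftSet_shiftSet, add_comm]
  have e2 : shiftSet D (shiftSet D L n) (-1) = shiftSet D (shiftSet D L (-1)) n := by
    rw [shiftSet_shiftSet, shiftSet_shiftSet, add_comm]
  refine IsTStructureOn.mk (Set.subset_univ _) (Set.subset_univ _)
    (fun _ _ e' hA _ => shiftSet_isoClosed _ _ e' hA)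
    (fun _ _ e' hA _ => shiftSet_isoClosed _ _ e' hA) ?_ ?_ ?_ ?_
  · rw [e]
    exact homZero_shiftSet (tstr hT).hom_zero n
  · intro A _
    rw [e]
    exact starSet_isoClosed _ _ (shiftNegShift A n)
      (starSet_shift ((tstr hT).cover (A⟦-n⟧) (Set.mem_univ _)) n)
  · rw [e2]
    exact shiftSet_mono (tstr hT).shiftL n
  · rw [e]
    exact shiftSet_mono (tstr hT).shiftG n

end Aux2

section Aux3

set_option linter.unusedSectionVars false

variable {D}

lemma aisle_one_sub {L G : Set D} (hT : IsTStructure D L G) : shiftSet D L 1 ⊆ L := by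
  intro P hP
  exact isoClosed_L hT (shiftNegShift P 1)
    (shift_one_mem_aisle hT ((mem_shiftSet_iff (isoClosed_L hT)).1 hP))

lemma aisle_step {L G : Set D} (hT : IsTStructure D L G) (a : ℤ) :
    shiftSet D L (a + 1) ⊆ shiftSet D L a := by
  have e : shiftSet D (shiftSet D L 1) a = shiftSet D L (a + 1) := by
    rw [shiftSet_shiftSet]; exact shiftSet_congr _ (by ring)
  rw [← e]
  exact shiftSet_mono (aisle_one_sub hT) a

lemma aisle_anti {L G : Set D} (hT : IsTStructure D L G) {a b : ℤ} (h : a ≤ b) :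
    shiftSet D L b ⊆ shiftSet D L a := by
  obtain ⟨k, hk⟩ := Int.le.dest h
  rw [← hk]
  clear hk h
  induction k with
  | zero => rw [shiftSet_congr L (by push_cast; ring : a + ((0:ℕ):ℤ) = a)]
  | succ k ih =>
    rw [shiftSet_congr L (by push_cast; ring : a + ((k+1:ℕ):ℤ) = (a + k) + 1)]
    exact (aisle_step hT _).trans ih

lemma aisle_nonneg_sub {L G : Set D} (hT : IsTStructure D L G) {b : ℤ} (h : 0 ≤ b) :
    shiftSet D L b ⊆ L :=
  fun _ hA => (mem_shiftSet_zero (isoClosed_L hT)).1 (aisle_anti hT h hA)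

lemma coaisle_step {L G : Set D} (hT : IsTStructure D L G) (a : ℤ) :
    shiftSet D G a ⊆ shiftSet D G (a + 1) := by
  have e : shiftSet D (shiftSet D G (-1)) (a + 1) = shiftSet D G a := by
    rw [shiftSet_shiftSet]; exact shiftSet_congr _ (by ring)
  rw [← e]
  exact shiftSet_mono (tstr hT).shiftG (a + 1)

lemma coaisle_mono {L G : Set D} (hT : IsTStructure D L G) {a b : ℤ} (h : a ≤ b) :
    shiftSet D G a ⊆ shiftSet D G b := by
  obtain ⟨k, hk⟩ := Int.le.dest h
  rw [← hk]
  clear hk h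
  induction k with
  | zero => rw [shiftSet_congr G (by push_cast; ring : a + ((0:ℕ):ℤ) = a)]
  | succ k ih =>
    rw [shiftSet_congr G (by push_cast; ring : a + ((k+1:ℕ):ℤ) = (a + k) + 1)]
    exact ih.trans (coaisle_step hT _)

lemma bddMemTriSub {L G : Set D} (hU : IsTStructure D L G) {S : Set D}
    (hS : IsTriangulatedSub D S) (hHS : L ∩ G ⊆ S) :
    ∀ (k : ℕ) (A : D), A ∈ L → A ∈ shiftSet D G (k : ℤ) → A ∈ S := by
  intro k
  induction k with
  | zero =>
    intro A hAL hAG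
    rw [shiftSet_congr G (by norm_num : ((0:ℕ):ℤ) = 0)] at hAG
    exact hHS ⟨hAL, (mem_shiftSet_zero (isoClosed_G hU)).1 hAG⟩
  | succ k ih =>
    intro A hAL hAG
    rw [shiftSet_congr G (by push_cast; ring : ((k+1:ℕ):ℤ) = (k:ℤ) + 1)] at hAG
    obtain ⟨P, Q, u, v, w, hP, hQ, hd⟩ := (tstr (tstr_shift hU 1)).cover A (Set.mem_univ A)
    have e0 : shiftSet D (shiftSet D G 1) (-1) = shiftSet D G 0 := by
      rw [shiftSet_shiftSet]; exact shiftSet_congr _ (by ring)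
    have hQG : Q ∈ G := (mem_shiftSet_zero (isoClosed_G hU)).1 (e0 ▸ hQ)
    have hPL : P ∈ L := aisle_nonneg_sub hU (by norm_num) hP
    have hQL : Q ∈ L := extAisle hU (rot_of_distTriang _ hd) hAL (shift_one_mem_aisle hU hPL)
    have hQS : Q ∈ S := hHS ⟨hQL, hQG⟩
    have e1 : shiftSet D (shiftSet D G ((k:ℤ)+2)) (-1) = shiftSet D G ((k:ℤ)+1) := by
      rw [shiftSet_shiftSet]; exact shiftSet_congr _ (by ring)
    have hPQ : P ∈ shiftSet D G ((k:ℤ) + 1) := by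
      have hA' : A ∈ shiftSet D (shiftSet D G ((k:ℤ)+2)) (-1) := by rw [e1]; exact hAG
      have hQ' : Q⟦(-1:ℤ)⟧ ∈ shiftSet D (shiftSet D G ((k:ℤ)+2)) (-1) := by
        rw [e1]
        exact coaisle_mono hU (by omega) (shift_obj_mem (-1) hQG)
      have := extCoaisle (tstr_shift hU ((k:ℤ)+2)) (inv_rot_of_distTriang _ hd) hQ' hA'
      rw [e1] at this
      exact this
    have hP1 : P⟦(-1:ℤ)⟧ ∈ L := (mem_shiftSet_iff (isoClosed_L hU)).1 hP
    have hP2 : P⟦(-1:ℤ)⟧ ∈ shiftSet D G (k:ℤ) := by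
      have hm : P ∈ shiftSet D (shiftSet D G (k:ℤ)) 1 := by
        rw [shiftSet_shiftSet, shiftSet_congr G (by ring : (k:ℤ) + 1 = (k:ℤ) + 1)]
        exact hPQ
      exact (mem_shiftSet_iff (shiftSet_isoClosed G (k:ℤ))).1 hm
    have hPS : P ∈ S := hS.iso (shiftNegShift P 1) (hS.shift 1 _ (ih _ hP1 hP2))
    exact hS.ext₂ _ hd hPS hQS

lemma mem_X2_of {X₁ X₂ : Set D} (hX : IsTStructure D X₁ X₂) {B : D}
    (h : B⟦(-1:ℤ)⟧ ∈ shiftSet D X₂ (-1)) : B ∈ X₂ := by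
  obtain ⟨Y, hY, ⟨e⟩⟩ := h
  exact isoClosed_G hX
    ((shiftNegShift Y 1).symm ≪≫ ((shiftFunctor D (1:ℤ)).mapIso e).symm ≪≫ shiftNegShift B 1) hY

end Aux3

/-- Lemma 5.2: let `S` be a triangulated full subcategory of `D`
containing the heart `ℋ = U^{≤0} ∩ U^{≥0}` such that `(S ∩ U^{≤0}, S ∩ U^{≥0})` is a
`t`-structure on `S`, and let `(X^{≤0}, X^{≥0})` be a `t`-structure on `D` with
`U^{≤-m} ⊆ X^{≤0} ⊆ U^{≤0}`. Then
`(S ∩ U^{≤-m}) * (X^{≤0} ∩ U^{≥-(m-1)}) = S ∩ X^{≤0}` and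
`(X^{≥1} ∩ U^{≤0})[1] * (S ∩ U^{≥0}) = S ∩ X^{≥0}`. -/
theorem stmt18 (L G : Set D) (hU : IsTStructure D L G) (m : ℤ) (hm : 1 ≤ m)
    (S : Set D) (hS : IsTriangulatedSub D S) (hHS : L ∩ G ⊆ S)
    (hUS : IsTStructureOn D S (S ∩ L) (S ∩ G))
    (X₁ X₂ : Set D) (hX : IsTStructure D X₁ X₂)
    (h1 : shiftSet D L m ⊆ X₁) (h2 : X₁ ⊆ L) :
    starSet D (S ∩ shiftSet D L m) (X₁ ∩ shiftSet D G (m - 1)) = S ∩ X₁ ∧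
    starSet D (shiftSet D (shiftSet D X₂ (-1) ∩ L) 1) (S ∩ G) = S ∩ X₂ := by
  have hm1 : (0:ℤ) ≤ m - 1 := by omega
  have em1 : shiftSet D (shiftSet D G m) (-1) = shiftSet D G (m-1) := by
    rw [shiftSet_shiftSet]; exact shiftSet_congr _ (by ring)
  have etn : shiftSet D G (((m-1).toNat : ℕ) : ℤ) = shiftSet D G (m-1) :=
    shiftSet_congr _ (Int.toNat_of_nonneg hm1)
  -- boundedness: objects of L ∩ G[m-1] are in S
  have hbdd : ∀ A : D, A ∈ L → A ∈ shiftSet D G (m-1) → A ∈ S := by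
    intro A hAL hAG
    exact bddMemTriSub hU hS hHS (m-1).toNat A hAL (by rw [etn]; exact hAG)
  -- G ⊆ X₂
  have hGX2 : G ⊆ X₂ := by
    intro B hB
    refine mem_X2_of hX (mem_coaisle_of_homZero hX (fun W hW φ => ?_))
    exact (tstr hU).hom_zero _ (h2 hW) _ (shift_obj_mem (-1) hB) φ
  -- X₂[-1] ⊆ G[m-1]
  have hX2G : shiftSet D X₂ (-1) ⊆ shiftSet D G (m-1) := by
    intro R hR
    have : R ∈ shiftSet D (shiftSet D G m) (-1) :=
      mem_coaisle_of_homZero (tstr_shift hU m)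
        (fun W hW φ => (tstr hX).hom_zero _ (h1 hW) _ hR φ)
    rwa [em1] at this
  constructor
  · apply Set.Subset.antisymm
    · rintro E ⟨A, B, u, v, w, ⟨hAS, hAL⟩, ⟨hBX, hBG⟩, hd⟩
      refine ⟨hS.ext₂ _ hd hAS (hbdd B (h2 hBX) hBG), extAisle hX hd (h1 hAL) hBX⟩
    · rintro E ⟨hES, hEX⟩
      obtain ⟨A, B, u, v, w, hA, hB, hd⟩ := (tstr (tstr_shift hU m)).cover E (Set.mem_univ E)
      have hBm : B ∈ shiftSet D G (m-1) := by rwa [em1] at hB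
      have hA1 : (A⟦(1:ℤ)⟧ : D) ∈ shiftSet D L (m+1) := by
        have := shift_obj_mem (S := shiftSet D L m) 1 hA
        rwa [shiftSet_shiftSet] at this
      have hBL : B ∈ L :=
        extAisle hU (rot_of_distTriang _ hd) (h2 hEX) (aisle_nonneg_sub hU (by omega) hA1)
      have hBS : B ∈ S := hbdd B hBL hBm
      have hBX1 : B ∈ X₁ :=
        extAisle hX (rot_of_distTriang _ hd) hEX (h1 (aisle_anti hU (by omega) hA1))
      have hAS : A ∈ S := hS.ext₂ _ (inv_rot_of_distTriang _ hd) (hS.shift (-1) _ hBS) hES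
      exact ⟨A, B, u, v, w, ⟨hAS, hA⟩, ⟨hBX1, hBm⟩, hd⟩
  · apply Set.Subset.antisymm
    · rintro E ⟨A, B, u, v, w, hA, ⟨hBS, hBG⟩, hd⟩
      obtain ⟨R, hR, ⟨e⟩⟩ := hA
      have hRS : R ∈ S := hbdd R hR.2 (hX2G hR.1)
      have hAS : A ∈ S := hS.iso e.symm (hS.shift 1 _ hRS)
      have hES : E ∈ S := hS.ext₂ _ hd hAS hBS
      have hAX : (A⟦(-1:ℤ)⟧ : D) ∈ shiftSet D X₂ (-1) :=
        shiftSet_isoClosed X₂ (-1)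
          ((shiftShiftNeg R 1).symm ≪≫ ((shiftFunctor D (-1:ℤ)).mapIso e).symm) hR.1
      have hBE : (B⟦(-1:ℤ)⟧ : D) ∈ shiftSet D X₂ (-1) := shift_obj_mem (-1) (hGX2 hBG)
      have hEX : E ∈ X₂ :=
        mem_X2_of hX (extCoaisle hX (Triangle.shift_distinguished _ hd (-1)) hAX hBE)
      exact ⟨hES, hEX⟩
    · rintro E ⟨hES, hEX⟩
      obtain ⟨P, Q, u, v, w, hP, hQ, hd⟩ := hUS.cover (E⟦(-1:ℤ)⟧) (hS.shift (-1) _ hES)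
      have hPX : P ∈ shiftSet D X₂ (-1) := by
        refine mem_coaisle_of_homZero hX (fun W hW ψ => ?_)
        have hψ1 : ψ⟦(1:ℤ)⟧' ≫ (-(u⟦(1:ℤ)⟧')) = 0 := by
          rw [Preadditive.comp_neg, ← Functor.map_comp,
            (tstr hX).hom_zero W hW _ (shift_obj_mem (-1) hEX) (ψ ≫ u),
            Functor.map_zero, neg_zero]
        obtain ⟨χ, hχ⟩ := Triangle.coyoneda_exact₂ _
          (rot_of_distTriang _ (rot_of_distTriang _ hd)) (ψ⟦(1:ℤ)⟧') hψ1
        have hχ0 : χ = 0 := (tstr hU).hom_zero _ (h2 (shift_one_mem_aisle hX hW)) _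
          (shiftSet_mono Set.inter_subset_right (-1) hQ) χ
        have hz : ψ⟦(1:ℤ)⟧' = 0 := by erw [hχ, hχ0, zero_comp]; rfl
        exact (shiftFunctor D (1:ℤ)).map_injective (by rw [hz, Functor.map_zero])
      have hE' : (E⟦(-1:ℤ)⟧ : D) ∈
          starSet D (shiftSet D X₂ (-1) ∩ L) (shiftSet D (S ∩ G) (-1)) :=
        ⟨P, Q, u, v, w, ⟨hPX, hP.2⟩, hQ, hd⟩
      have hE2 := starSet_shift hE' 1
      have hE3 := starSet_isoClosed _ _ (shiftNegShift E 1) hE2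
      refine starSet_mono subset_rfl ?_ hE3
      intro Z hZ
      have e0 : shiftSet D (shiftSet D (S ∩ G) (-1)) 1 = shiftSet D (S ∩ G) 0 := by
        rw [shiftSet_shiftSet]; exact shiftSet_congr _ (by ring)
      rw [e0] at hZ
      exact (mem_shiftSet_zero
        (fun _ _ e h => Set.mem_inter (hS.iso e h.1) (isoClosed_G hU e h.2))).1 hZ
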